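/- Relation between the quaternion quadratic phase Wigner–Ville distribution and the STQQPFT: (W^{∧₁,∧₂}_ℍ(f,g))(x,ξ) = 4 ψ^i_{∧₁}(x₁,ξ₁) (S^{∧₁',∧₂'}_{ℍ,g̃} f)(2x, ξ'_x) ψ^j_{∧₂}(x₂,ξ₂), where ∧ₗ' = (4Aₗ, 2Bₗ, Cₗ, 2Dₗ, Eₗ), g̃(t) = g(-t), ξ'_x = (ξ₁ - 4A₁x₁/B₁, ξ₂ - 4A₂x₂/B₂), and ψ^i_{∧₁}, ψ^j_{∧₂} are unit-modulus quaternion phase factors. In particular |(W^{∧₁,∧₂}_ℍ(f,g))(x,ξ)| = 4|(S^{∧₁',∧₂'}_{ℍ,g̃} f)(2x,ξ'_x)|. -/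

import Mathlib

open MeasureTheory Real
open scoped ENNReal

noncomputable section

/-- The real quaternions. -/
abbrev ℍ := Quaternion ℝ

/-- The quaternion imaginary unit `i`. -/
def qi : ℍ := ⟨0, 1, 0, 0⟩

/-- The quaternion imaginary unit `j`. -/
def qj : ℍ := ⟨0, 0, 1, 0⟩

/-- Exponential in the quaternions. -/
def qexp (q : ℍ) : ℍ := NormedSpace.exp q

/-- A parameter tuple `∧ = (A,B,C,D,E)` with `B ≠ 0` for quadratic phase transforms. -/
structure QPParams where
  A : ℝ
  B : ℝ
  C : ℝ
  D : ℝ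
  E : ℝ
  hB : B ≠ 0

/-- The QQPFT kernel with imaginary unit `i`. -/
def KerI (L : QPParams) (t ξ : ℝ) : ℍ :=
  (1 / Real.sqrt (2 * π)) •
    qexp (-(L.A * t ^ 2 + L.B * t * ξ + L.C * ξ ^ 2 + L.D * t + L.E * ξ) • qi)

/-- The QQPFT kernel with imaginary unit `j`. -/
def KerJ (L : QPParams) (t ξ : ℝ) : ℍ :=
  (1 / Real.sqrt (2 * π)) •
    qexp (-(L.A * t ^ 2 + L.B * t * ξ + L.C * ξ ^ 2 + L.D * t + L.E * ξ) • qj)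

/-- The two-sided quaternion quadratic phase Fourier transform. -/
def QQPFT (L1 L2 : QPParams) (f : ℝ × ℝ → ℍ) (ξ : ℝ × ℝ) : ℍ :=
  ∫ t : ℝ × ℝ, KerI L1 t.1 ξ.1 * f t * KerJ L2 t.2 ξ.2

/-- The two-sided quaternion Fourier transform. -/
def QFT (f : ℝ × ℝ → ℍ) (ξ : ℝ × ℝ) : ℍ :=
  ∫ t : ℝ × ℝ, ((1 / Real.sqrt (2 * π)) • qexp (-(t.1 * ξ.1) • qi)) * f t *
    ((1 / Real.sqrt (2 * π)) • qexp (-(t.2 * ξ.2) • qj))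

/-- The short time quaternion quadratic phase Fourier transform with window `g`. -/
def STQQPFT (L1 L2 : QPParams) (g f : ℝ × ℝ → ℍ) (x ξ : ℝ × ℝ) : ℍ :=
  ∫ t : ℝ × ℝ, KerI L1 t.1 ξ.1 * (f t * star (g (t - x))) * KerJ L2 t.2 ξ.2

/-- The symmetric real scalar inner product `⟨f,g⟩ = ∫ Sc[f ḡ]`. -/
def scInner (f g : ℝ × ℝ → ℍ) : ℝ := ∫ x : ℝ × ℝ, (f x * star (g x)).re

/-- The phase factor `φ^i_{∧,r}(k,ξ)`. -/
def phiI (L : QPParams) (r k ξ : ℝ) : ℍ :=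
  qexp (-(L.A * r ^ 2 * k ^ 2 + L.D * r * k + L.B * r * k * ξ
      - 4 * r ^ 2 * L.A ^ 2 * L.C * k ^ 2 / L.B ^ 2
      - 4 * r * L.A * L.C * k * ξ / L.B - 2 * r * L.A * L.E * k / L.B) • qi)

/-- The phase factor `φ^j_{∧,r}(k,ξ)`. -/
def phiJ (L : QPParams) (r k ξ : ℝ) : ℍ :=
  qexp (-(L.A * r ^ 2 * k ^ 2 + L.D * r * k + L.B * r * k * ξ
      - 4 * r ^ 2 * L.A ^ 2 * L.C * k ^ 2 / L.B ^ 2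
      - 4 * r * L.A * L.C * k * ξ / L.B - 2 * r * L.A * L.E * k / L.B) • qj)

/-- The two-sided quaternion quadratic phase Wigner–Ville distribution. -/
def QQPWVD (L1 L2 : QPParams) (f g : ℝ × ℝ → ℍ) (x ξ : ℝ × ℝ) : ℍ :=
  ∫ t : ℝ × ℝ, KerI L1 t.1 ξ.1 *
    (f (x + (1 / 2 : ℝ) • t) * star (g (x - (1 / 2 : ℝ) • t))) * KerJ L2 t.2 ξ.2

/-- The unit-modulus phase factor `ψ^i_{∧}(x,ξ)`. -/
def psiI (L : QPParams) (x ξ : ℝ) : ℍ :=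
  qexp (-(4 * L.A * x ^ 2 - 2 * L.B * x * ξ - 2 * L.D * x
      - 16 * L.A ^ 2 * L.C * x ^ 2 / L.B ^ 2
      + 8 * L.A * L.C * x * ξ / L.B + 4 * L.A * L.E * x / L.B) • qi)

/-- The unit-modulus phase factor `ψ^j_{∧}(x,ξ)`. -/
def psiJ (L : QPParams) (x ξ : ℝ) : ℍ :=
  qexp (-(4 * L.A * x ^ 2 - 2 * L.B * x * ξ - 2 * L.D * x
      - 16 * L.A ^ 2 * L.C * x ^ 2 / L.B ^ 2
      + 8 * L.A * L.C * x * ξ / L.B + 4 * L.A * L.E * x / L.B) • qj)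


section Aux

/-- Norm of a quaternion exponential of a real multiple of `qi`. -/
lemma norm_qexp_smul_qi (r : ℝ) : ‖qexp (r • qi)‖ = 1 := by
  rw [qexp, Quaternion.norm_exp]
  have h : (r • qi).re = 0 := by exact smul_zero r
  rw [h, NormedSpace.exp_zero]; simp

/-- Norm of a quaternion exponential of a real multiple of `qj`. -/
lemma norm_qexp_smul_qj (r : ℝ) : ‖qexp (r • qj)‖ = 1 := by
  rw [qexp, Quaternion.norm_exp]
  have h : (r • qj).re = 0 := by exact smul_zero r
  rw [h, NormedSpace.exp_zero]; simp

/-- Additivity of `qexp` along a single axis. -/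
lemma qexp_add_mul (u : ℍ) (a b : ℝ) : qexp ((a + b) • u) = qexp (a • u) * qexp (b • u) := by
  rw [qexp, qexp, qexp, add_smul]
  exact NormedSpace.exp_add_of_commute_of_mem_ball (𝕂 := ℝ) (((Commute.refl u).smul_left a).smul_right b)
    ((NormedSpace.expSeries_radius_eq_top ℝ ℍ).symm ▸ edist_lt_top _ _)
    ((NormedSpace.expSeries_radius_eq_top ℝ ℍ).symm ▸ edist_lt_top _ _)

/-- Left multiplication by a unit-norm quaternion, as a linear isometry. -/
def mulLeftLI (a : ℍ) (ha : ‖a‖ = 1) : ℍ →ₗᵢ[ℝ] ℍ :=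
  ⟨{ toFun := fun x => a * x
     map_add' := fun x y => mul_add a x y
     map_smul' := fun r x => by simp [mul_smul_comm] }, fun x => by
      simp only [LinearMap.coe_mk, AddHom.coe_mk]
      rw [norm_mul, ha, one_mul]⟩

/-- Right multiplication by a unit-norm quaternion, as a linear isometry. -/
def mulRightLI (b : ℍ) (hb : ‖b‖ = 1) : ℍ →ₗᵢ[ℝ] ℍ :=
  ⟨{ toFun := fun x => x * b
     map_add' := fun x y => add_mul x y b
     map_smul' := fun r x => by simp [smul_mul_assoc] }, fun x => by
      simp only [LinearMap.coe_mk, AddHom.coe_mk]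
      rw [norm_mul, hb, mul_one]⟩

/-- Pulling unit-norm constants out of a quaternionic integral. -/
lemma integral_unit_mul_mul {a b : ℍ} (ha : ‖a‖ = 1) (hb : ‖b‖ = 1) (φ : ℝ × ℝ → ℍ) :
    ∫ u : ℝ × ℝ, a * φ u * b = a * (∫ u : ℝ × ℝ, φ u) * b := by
  calc ∫ u : ℝ × ℝ, a * φ u * b
      = ∫ u : ℝ × ℝ, (mulRightLI b hb) ((mulLeftLI a ha) (φ u)) := rfl
    _ = (mulRightLI b hb) (∫ u : ℝ × ℝ, (mulLeftLI a ha) (φ u)) :=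
        (mulRightLI b hb).integral_comp_comm _
    _ = (mulRightLI b hb) ((mulLeftLI a ha) (∫ u : ℝ × ℝ, φ u)) := by
        rw [(mulLeftLI a ha).integral_comp_comm]
    _ = a * (∫ u : ℝ × ℝ, φ u) * b := rfl

/-- Change of variables `t = 2(u - x)` in a planar integral. -/
lemma integral_comp_two_smul_sub (F : ℝ × ℝ → ℍ) (x : ℝ × ℝ) :
    ∫ t : ℝ × ℝ, F t = (4 : ℝ) • ∫ u : ℝ × ℝ, F ((2 : ℝ) • (u - x)) := by
  have h1 : ∫ u : ℝ × ℝ, F ((2 : ℝ) • (u - x)) = ∫ u : ℝ × ℝ, F ((2 : ℝ) • u) :=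
    integral_sub_right_eq_self (fun v => F ((2 : ℝ) • v)) x
  rw [h1, MeasureTheory.Measure.integral_comp_smul volume F (2 : ℝ)]
  rw [Module.finrank_prod, Module.finrank_self]
  rw [smul_smul, show (4 : ℝ) * |((2 : ℝ) ^ (1 + 1))⁻¹| = 1 by
    rw [abs_of_nonneg (by norm_num : (0:ℝ) ≤ ((2:ℝ) ^ (1+1))⁻¹)]; norm_num, one_smul]

/-- Key kernel identity for the `i`-kernel. -/
lemma kerI_key (L : QPParams) (x ξ u : ℝ) :
    KerI L (2 * (u - x)) ξ =
      psiI L x ξ * KerI ⟨4 * L.A, 2 * L.B, L.C, 2 * L.D, L.E, mul_ne_zero two_ne_zero L.hB⟩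
        u (ξ - 4 * L.A * x / L.B) := by
  unfold KerI psiI
  rw [mul_smul_comm]
  congr 1
  rw [← qexp_add_mul]
  congr 2
  have hB := L.hB
  field_simp
  ring

/-- Key kernel identity for the `j`-kernel. -/
lemma kerJ_key (L : QPParams) (x ξ u : ℝ) :
    KerJ L (2 * (u - x)) ξ =
      KerJ ⟨4 * L.A, 2 * L.B, L.C, 2 * L.D, L.E, mul_ne_zero two_ne_zero L.hB⟩
        u (ξ - 4 * L.A * x / L.B) * psiJ L x ξ := by
  unfold KerJ psiJ
  rw [smul_mul_assoc]
  congr 1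
  rw [← qexp_add_mul]
  congr 2
  have hB := L.hB
  field_simp
  ring

end Aux

/-- relation between the QQPWVD and the STQQPFT. -/
theorem qqpwvd_eq_stqqpft (L1 L2 : QPParams) (g f : ℝ × ℝ → ℍ)
    (hg2 : MemLp g 2 volume) (hgi : MemLp g ⊤ volume) (hf : MemLp f 2 volume)
    (x ξ : ℝ × ℝ) :
    QQPWVD L1 L2 f g x ξ =
      (4 : ℝ) • (psiI L1 x.1 ξ.1 *
        STQQPFT ⟨4 * L1.A, 2 * L1.B, L1.C, 2 * L1.D, L1.E, mul_ne_zero two_ne_zero L1.hB⟩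
          ⟨4 * L2.A, 2 * L2.B, L2.C, 2 * L2.D, L2.E, mul_ne_zero two_ne_zero L2.hB⟩
          (fun t => g (-t)) f ((2 : ℝ) • x)
          (ξ.1 - 4 * L1.A * x.1 / L1.B, ξ.2 - 4 * L2.A * x.2 / L2.B) *
        psiJ L2 x.2 ξ.2) ∧
    ‖QQPWVD L1 L2 f g x ξ‖ =
      4 * ‖STQQPFT ⟨4 * L1.A, 2 * L1.B, L1.C, 2 * L1.D, L1.E, mul_ne_zero two_ne_zero L1.hB⟩
          ⟨4 * L2.A, 2 * L2.B, L2.C, 2 * L2.D, L2.E, mul_ne_zero two_ne_zero L2.hB⟩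
          (fun t => g (-t)) f ((2 : ℝ) • x)
          (ξ.1 - 4 * L1.A * x.1 / L1.B, ξ.2 - 4 * L2.A * x.2 / L2.B)‖ := by
  set L1' : QPParams := ⟨4 * L1.A, 2 * L1.B, L1.C, 2 * L1.D, L1.E, mul_ne_zero two_ne_zero L1.hB⟩
    with hL1'
  set L2' : QPParams := ⟨4 * L2.A, 2 * L2.B, L2.C, 2 * L2.D, L2.E, mul_ne_zero two_ne_zero L2.hB⟩
    with hL2'
  set ξ' : ℝ × ℝ := (ξ.1 - 4 * L1.A * x.1 / L1.B, ξ.2 - 4 * L2.A * x.2 / L2.B) with hξ'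
  set a : ℍ := psiI L1 x.1 ξ.1 with hapsi
  set b : ℍ := psiJ L2 x.2 ξ.2 with hbpsi
  have ha : ‖a‖ = 1 := norm_qexp_smul_qi _
  have hb : ‖b‖ = 1 := norm_qexp_smul_qj _
  set F : ℝ × ℝ → ℍ := fun t =>
    KerI L1 t.1 ξ.1 * (f (x + (1 / 2 : ℝ) • t) * star (g (x - (1 / 2 : ℝ) • t))) *
      KerJ L2 t.2 ξ.2 with hFdef
  set G : ℝ × ℝ → ℍ := fun u =>
    KerI L1' u.1 ξ'.1 * (f u * star (g (-(u - (2 : ℝ) • x)))) * KerJ L2' u.2 ξ'.2 with hGdef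
  have hpt : ∀ u : ℝ × ℝ, F ((2 : ℝ) • (u - x)) = a * G u * b := by
    intro u
    have h1 : ((2 : ℝ) • (u - x)).1 = 2 * (u.1 - x.1) := rfl
    have h1' : ((2 : ℝ) • (u - x)).2 = 2 * (u.2 - x.2) := rfl
    have h2 : x + (1 / 2 : ℝ) • ((2 : ℝ) • (u - x)) = u := by
      rw [smul_smul]; norm_num
    have h3 : x - (1 / 2 : ℝ) • ((2 : ℝ) • (u - x)) = -(u - (2 : ℝ) • x) := by
      rw [smul_smul]
      norm_num
      ext <;> simp [Prod.ext_iff] <;> ring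
    rw [hFdef]
    simp only [h1, h1', h2, h3]
    rw [kerI_key L1 x.1 ξ.1 u.1, kerJ_key L2 x.2 ξ.2 u.2]
    rw [hGdef, hapsi, hbpsi]
    simp only [hξ', hL1', hL2']
    simp only [mul_assoc]
  have key : QQPWVD L1 L2 f g x ξ = (4 : ℝ) • (a * STQQPFT L1' L2' (fun t => g (-t)) f ((2 : ℝ) • x) ξ' * b) := by
    have h0 : QQPWVD L1 L2 f g x ξ = ∫ t : ℝ × ℝ, F t := rfl
    have hS : STQQPFT L1' L2' (fun t => g (-t)) f ((2 : ℝ) • x) ξ' = ∫ u : ℝ × ℝ, G u := rfl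
    rw [h0, hS, integral_comp_two_smul_sub F x]
    congr 1
    rw [show (fun u : ℝ × ℝ => F ((2 : ℝ) • (u - x))) = fun u => a * G u * b from funext hpt]
    exact integral_unit_mul_mul ha hb G
  refine ⟨key, ?_⟩
  rw [key, norm_smul, norm_mul, norm_mul, ha, hb]
  norm_num
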